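/- Let X be a Banach space and F ⊂ B_X a spear set, i.e. ‖F + 𝕋x‖ = 1 + ‖x‖ for every x ∈ X, where 𝕋 is the set of modulus-one scalars and ‖F + 𝕋x‖ = sup{‖z + ωx‖ : z ∈ F, ω ∈ 𝕋}. Then max(‖F + x‖, ‖F − x‖)² ≥ 1 + ‖x‖² for every x ∈ X. -/
import Mathlib


open Metric

/-- If `F ⊆ B_X` is a spear set, i.e. `‖F + 𝕋x‖ = 1 + ‖x‖` for every `x`,
then `max(‖F + x‖, ‖F − x‖)² ≥ 1 + ‖x‖²` for every `x ∈ X`. -/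
theorem stmt1 {𝕜 X : Type*} [RCLike 𝕜] [NormedAddCommGroup X] [NormedSpace 𝕜 X]
    [CompleteSpace X] (F : Set X) (hF : F ⊆ closedBall (0 : X) 1)
    (h : ∀ x : X,
      sSup {r : ℝ | ∃ z ∈ F, ∃ ω : 𝕜, ‖ω‖ = 1 ∧ r = ‖z + ω • x‖} = 1 + ‖x‖)
    (x : X) :
    1 + ‖x‖ ^ 2 ≤
      (max (sSup ((fun z => ‖z + x‖) '' F)) (sSup ((fun z => ‖z - x‖) '' F))) ^ 2 := by
  set t : ℝ := ‖x‖ with ht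
  set A := (fun z => ‖z + x‖) '' F with hA
  set B := (fun z => ‖z - x‖) '' F with hB
  set M := max (sSup A) (sSup B) with hM
  have ht0 : 0 ≤ t := norm_nonneg x
  -- F is nonempty
  have hFne : F.Nonempty := by
    by_contra hne
    rw [Set.not_nonempty_iff_eq_empty] at hne
    have h0 := h 0
    have : {r : ℝ | ∃ z ∈ F, ∃ ω : 𝕜, ‖ω‖ = 1 ∧ r = ‖z + ω • (0:X)‖} = ∅ := by
      simp [hne]
    rw [this, Real.sSup_empty, norm_zero] at h0
    linarith
  obtain ⟨z₀, hz₀⟩ := hFne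
  have hnormF : ∀ z ∈ F, ‖z‖ ≤ 1 := by
    intro z hz
    have := hF hz
    rwa [mem_closedBall, dist_zero_right] at this
  have hbddA : BddAbove A := by
    refine ⟨1 + ‖x‖, ?_⟩
    rintro r ⟨z, hz, rfl⟩
    calc ‖z + x‖ ≤ ‖z‖ + ‖x‖ := norm_add_le _ _
      _ ≤ 1 + ‖x‖ := by linarith [hnormF z hz]
  have hbddB : BddAbove B := by
    refine ⟨1 + ‖x‖, ?_⟩
    rintro r ⟨z, hz, rfl⟩
    calc ‖z - x‖ ≤ ‖z‖ + ‖x‖ := norm_sub_le _ _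
      _ ≤ 1 + ‖x‖ := by linarith [hnormF z hz]
  have hAle : ∀ z ∈ F, ‖z + x‖ ≤ M :=
    fun z hz => le_trans (le_csSup hbddA ⟨z, hz, rfl⟩) (le_max_left _ _)
  have hBle : ∀ z ∈ F, ‖z - x‖ ≤ M :=
    fun z hz => le_trans (le_csSup hbddB ⟨z, hz, rfl⟩) (le_max_right _ _)
  have hM0 : 0 ≤ M := le_trans (norm_nonneg _) (hAle z₀ hz₀)
  have hs0 : 0 < Real.sqrt (1 + t ^ 2) := by
    apply Real.sqrt_pos.mpr; nlinarith
  have hssq : Real.sqrt (1 + t ^ 2) ^ 2 = 1 + t ^ 2 :=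
    Real.sq_sqrt (by nlinarith)
  -- key pointwise bound
  have key : ∀ z ∈ F, ∀ ω : 𝕜, ‖ω‖ = 1 →
      ‖z + ω • ((t : 𝕜) • x)‖ ≤ Real.sqrt (1 + t ^ 2) * M := by
    intro z hz ω hω
    set c : 𝕜 := (t : 𝕜) * ω with hc
    have hcnorm : ‖c‖ = t := by
      rw [hc, norm_mul, hω, RCLike.norm_ofReal, abs_of_nonneg ht0, mul_one]
    have eq1 : z + ω • ((t : 𝕜) • x)
        = ((1 + c) / 2) • (z + x) + ((1 - c) / 2) • (z - x) := by
      rw [hc]; module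
    have par := parallelogram_law_with_norm 𝕜 (1 : 𝕜) c
    rw [norm_one, hcnorm] at par
    have hpq : ‖(1:𝕜) + c‖ + ‖(1:𝕜) - c‖ ≤ 2 * Real.sqrt (1 + t ^ 2) := by
      nlinarith [sq_nonneg (‖(1:𝕜) + c‖ - ‖(1:𝕜) - c‖), norm_nonneg ((1:𝕜) + c),
        norm_nonneg ((1:𝕜) - c), hssq, hs0.le,
        sq_nonneg (‖(1:𝕜) + c‖ + ‖(1:𝕜) - c‖ - 2 * Real.sqrt (1 + t ^ 2))]
    calc ‖z + ω • ((t : 𝕜) • x)‖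
        = ‖((1 + c) / 2) • (z + x) + ((1 - c) / 2) • (z - x)‖ := by rw [eq1]
      _ ≤ ‖((1 + c) / 2) • (z + x)‖ + ‖((1 - c) / 2) • (z - x)‖ := norm_add_le _ _
      _ = ‖(1 + c) / 2‖ * ‖z + x‖ + ‖(1 - c) / 2‖ * ‖z - x‖ := by
          rw [norm_smul, norm_smul]
      _ ≤ ‖(1 + c) / 2‖ * M + ‖(1 - c) / 2‖ * M := by
          gcongr <;> first | exact hAle z hz | exact hBle z hz
      _ = (‖(1:𝕜) + c‖ + ‖(1:𝕜) - c‖) / 2 * M := by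
          rw [norm_div, norm_div]
          have : ‖(2:𝕜)‖ = 2 := by simp
          rw [this]; ring
      _ ≤ Real.sqrt (1 + t ^ 2) * M := by
          apply mul_le_mul_of_nonneg_right _ hM0
          linarith
  -- apply the spear hypothesis at (t : 𝕜) • x
  have hy := h ((t : 𝕜) • x)
  have hynorm : ‖(t : 𝕜) • x‖ = t ^ 2 := by
    rw [norm_smul, RCLike.norm_ofReal, abs_of_nonneg ht0, ← ht]; ring
  rw [hynorm] at hy
  have hsup : sSup {r : ℝ | ∃ z ∈ F, ∃ ω : 𝕜, ‖ω‖ = 1 ∧ r = ‖z + ω • ((t : 𝕜) • x)‖}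
      ≤ Real.sqrt (1 + t ^ 2) * M := by
    apply Real.sSup_le
    · rintro r ⟨z, hz, ω, hω, rfl⟩
      exact key z hz ω hω
    · positivity
  rw [hy] at hsup
  have hsM : Real.sqrt (1 + t ^ 2) ≤ M := by
    nlinarith [hsup]
  nlinarith
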